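/- (Theorem 2) Algorithm 2 (the fast-read register algorithm built on top of the G-fisheye (SC,CC)-broadcast of Algorithm 1) implements G-fisheye (SC,CC)-consistency: every history Ĥ produced by an execution of Algorithm 2 is G-fisheye (SC,CC)-consistent. -/

import Mathlib

/-!
Model of Algorithm 2 (the fast-read register algorithm) running on top of an
abstract `G`-fisheye (SC,CC)-broadcast.

Processes (type `P`) interact through shared read/write registers (type `X`)
holding values of type `V`; the initial value of every register is `⊥`
(modelled by `Option V`, with `none = ⊥`).  `X.write(v)` at `p` toco-broadcasts
`WRITE(X,v,p)` and waits until this message is toco-delivered at `p`;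
`X.read()` at `p` returns the local copy of `X`; upon toco-delivery of
`WRITE(X,v,q)` at `p`, the local copy of `X` at `p` is set to `v`.  Following
the paper, all written values are assumed distinct, so a `WRITE` message is
identified by the (process, register, value) triple it carries.
-/

namespace FisheyeReg

/-- Events of an execution of Algorithm 2: `invWrite p x v` is the invocation
of `X.write(v)` by `p` (which toco-broadcasts `WRITE(x,v,p)`); `read p x v` is
a (complete) read of register `x` by `p` returning `v`; `deliver p q x v` is
the toco-delivery at `p` of the message `WRITE(x,v,q)`. -/
inductive AEvent (P X V : Type) where
  | invWrite (p : P) (x : X) (v : V)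
  | read (p : P) (x : X) (v : Option V)
  | deliver (p : P) (q : P) (x : X) (v : V)

variable {P X V : Type}

/-- The message `WRITE(x,v,q)` is toco-broadcast at time `t`. -/
def bAt (f : ℕ → Option (AEvent P X V)) (q : P) (x : X) (v : V) (t : ℕ) : Prop :=
  f t = some (.invWrite q x v)

/-- The message `WRITE(x,v,q)` is toco-delivered at process `p` at time `t`. -/
def dAt (f : ℕ → Option (AEvent P X V)) (p q : P) (x : X) (v : V) (t : ℕ) : Prop :=
  f t = some (.deliver p q x v)

/-- The message causal order `⇝_M` on `WRITE` messages (identified by the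
triples `(sender, register, value)`). -/
inductive MCausal (f : ℕ → Option (AEvent P X V)) : P × X × V → P × X × V → Prop
  | sameProc {q : P} {x1 x2 : X} {v1 v2 : V} {t1 t2 : ℕ} :
      t1 < t2 → bAt f q x1 v1 t1 → bAt f q x2 v2 t2 →
      MCausal f (q, x1, v1) (q, x2, v2)
  | delivered {p q : P} {x1 x2 : X} {v1 v2 : V} {t1 t2 : ℕ} :
      t1 < t2 → dAt f p q x1 v1 t1 → bAt f p x2 v2 t2 →
      MCausal f (q, x1, v1) (p, x2, v2)
  | trans {a b c : P × X × V} : MCausal f a b → MCausal f b c → MCausal f a c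

/-- An execution of Algorithm 2 over a `G`-fisheye (SC,CC)-broadcast.  `ev` is
the global trace of events (at most one per instant), `val t p x` is the local
copy of register `x` at process `p` at time `t`.  The fields state: the local
copies start at `⊥` and are updated exactly by deliveries of `WRITE` messages;
reads return the current local copy; all written values are distinct; the
underlying broadcast satisfies Validity, Integrity, Causal order, `G`-delivery
order and Termination; and a writer blocks (performs no other operation) until
its own `WRITE` message is toco-delivered locally. -/
structure Exec (P X V : Type) (G : SimpleGraph P) where
  ev : ℕ → Option (AEvent P X V)
  val : ℕ → P → X → Option V
  val0 : ∀ (p : P) (x : X), val 0 p x = none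
  valDeliv : ∀ (t : ℕ) (p q : P) (x : X) (v : V),
    ev t = some (.deliver p q x v) → val (t + 1) p x = some v
  valFrame : ∀ (t : ℕ) (p : P) (x : X),
    (¬ ∃ (q : P) (v : V), ev t = some (.deliver p q x v)) → val (t + 1) p x = val t p x
  readsLocal : ∀ (t : ℕ) (p : P) (x : X) (v : Option V),
    ev t = some (.read p x v) → v = val t p x
  distinctValues : ∀ (t t' : ℕ) (p p' : P) (x x' : X) (v : V),
    bAt ev p x v t → bAt ev p' x' v t' → t = t'
  validity : ∀ (t : ℕ) (p q : P) (x : X) (v : V),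
    dAt ev p q x v t → ∃ t', bAt ev q x v t'
  integrity : ∀ (p q : P) (x : X) (v : V) (t t' : ℕ),
    dAt ev p q x v t → dAt ev p q x v t' → t = t'
  termination : ∀ (t : ℕ) (q : P) (x : X) (v : V),
    bAt ev q x v t → ∀ p : P, ∃ t', dAt ev p q x v t'
  causalOrder : ∀ m1 m2 : P × X × V, MCausal ev m1 m2 →
    ¬ ∃ (r : P) (t1 t2 : ℕ), t1 < t2 ∧
        dAt ev r m2.1 m2.2.1 m2.2.2 t1 ∧ dAt ev r m1.1 m1.2.1 m1.2.2 t2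
  gOrder : ∀ p q : P, G.Adj p q → ∀ (x x' : X) (v v' : V) (tb tb' : ℕ),
    bAt ev p x v tb → bAt ev q x' v' tb' →
    (∃ (r : P) (t1 t2 : ℕ), t1 < t2 ∧ dAt ev r p x v t1 ∧ dAt ev r q x' v' t2) →
    ¬ ∃ (r : P) (t1 t2 : ℕ), t1 < t2 ∧ dAt ev r q x' v' t1 ∧ dAt ev r p x v t2
  blockingWrite : ∀ (t : ℕ) (p : P) (x : X) (v : V), bAt ev p x v t →
    ∃ td, t < td ∧ dAt ev p p x v td ∧
      ∀ s, t < s → s < td →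
        (∀ (x' : X) (v' : V), ev s ≠ some (.invWrite p x' v')) ∧
        (∀ (x' : X) (v' : Option V), ev s ≠ some (.read p x' v'))

/-- Operation at time `t` is a read by `p` of register `x` returning `v`. -/
def isReadAt (f : ℕ → Option (AEvent P X V)) (t : ℕ) (p : P) (x : X) (v : Option V) : Prop :=
  f t = some (.read p x v)

/-- Operation at time `t` is a write by `p` of value `v` to register `x`
(identified with its invocation event). -/
def isWriteAt (f : ℕ → Option (AEvent P X V)) (t : ℕ) (p : P) (x : X) (v : V) : Prop :=
  f t = some (.invWrite p x v)

/-- Time `t` carries an operation (read or write) of process `p`. -/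
def isOpOf (f : ℕ → Option (AEvent P X V)) (t : ℕ) (p : P) : Prop :=
  (∃ (x : X) (v : Option V), isReadAt f t p x v) ∨ (∃ (x : X) (v : V), isWriteAt f t p x v)

/-- Time `t` carries a write operation. -/
def isWrite (f : ℕ → Option (AEvent P X V)) (t : ℕ) : Prop :=
  ∃ (p : P) (x : X) (v : V), isWriteAt f t p x v

/-- Process order: two operations of the same process, in temporal order. -/
def procOrder (f : ℕ → Option (AEvent P X V)) (a b : ℕ) : Prop :=
  a < b ∧ ∃ p : P, isOpOf f a p ∧ isOpOf f b p

/-- Read-from links: the read at time `r` returns the value `v` written by the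
write at time `w` (values being distinct, the write is unique). -/
def readFrom (f : ℕ → Option (AEvent P X V)) (w r : ℕ) : Prop :=
  ∃ (q p : P) (x : X) (v : V), isWriteAt f w q x v ∧ isReadAt f r p x (some v)

/-- The causal order `⇝_H` on operations: the transitive closure of the union
of the process orders and the read-from links. -/
def causalH (f : ℕ → Option (AEvent P X V)) : ℕ → ℕ → Prop :=
  Relation.TransGen (fun a b => procOrder f a b ∨ readFrom f a b)

/-- `r` is a causal order for the history of the trace `f`: a strict partial
order extending the process orders, in which every read of a register returns
the value of a `r`-latest write to that register preceding it (or `⊥` if no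
write to it precedes it), i.e., no read returns an overwritten value. -/
def IsCausalOrderTrace (f : ℕ → Option (AEvent P X V)) (r : ℕ → ℕ → Prop) : Prop :=
  (∀ a, ¬ r a a) ∧
  (∀ a b c, r a b → r b c → r a c) ∧
  (∀ a b, procOrder f a b → r a b) ∧
  (∀ (t : ℕ) (p : P) (x : X) (v : V), isReadAt f t p x (some v) →
    ∃ (w : ℕ) (q : P), isWriteAt f w q x v ∧ r w t ∧
      ¬ ∃ (w' : ℕ) (q' : P) (v' : V), isWriteAt f w' q' x v' ∧ r w w' ∧ r w' t) ∧
  (∀ (t : ℕ) (p : P) (x : X), isReadAt f t p x none →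
    ¬ ∃ (w : ℕ) (q : P) (v : V), isWriteAt f w q x v ∧ r w t)

end FisheyeReg

namespace FisheyeReg

/-- `S` is a (strict) linear order on the sub-history with domain `D`. -/
def LinearOnTrace {P X V : Type} (_f : ℕ → Option (AEvent P X V))
    (D : ℕ → Prop) (S : ℕ → ℕ → Prop) : Prop :=
  (∀ a b, S a b → D a ∧ D b) ∧
  (∀ a, ¬ S a a) ∧
  (∀ a b c, S a b → S b c → S a c) ∧
  (∀ a b, D a → D b → a ≠ b → S a b ∨ S b a)

/-- The sub-history with domain `D`, linearly ordered by `S`, is legal: every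
read of a register in it returns the value of the `S`-latest preceding write to
that register in `D` (or `⊥` if there is none). -/
def LegalOnTrace {P X V : Type} (f : ℕ → Option (AEvent P X V))
    (D : ℕ → Prop) (S : ℕ → ℕ → Prop) : Prop :=
  (∀ (t : ℕ) (p : P) (x : X) (v : V), D t → isReadAt f t p x (some v) →
    ∃ (w : ℕ) (q : P), D w ∧ isWriteAt f w q x v ∧ S w t ∧
      ¬ ∃ (w' : ℕ) (q' : P) (v' : V), D w' ∧ isWriteAt f w' q' x v' ∧ S w w' ∧ S w' t) ∧
  (∀ (t : ℕ) (p : P) (x : X), D t → isReadAt f t p x none →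
    ¬ ∃ (w : ℕ) (q : P) (v : V), D w ∧ isWriteAt f w q x v ∧ S w t)

/-- The domain of `Ĥ|(p+W)`: all operations of process `p` plus the write
operations of all processes. -/
def Dom {P X V : Type} (f : ℕ → Option (AEvent P X V)) (p : P) : ℕ → Prop :=
  fun t => isOpOf f t p ∨ isWrite f t

/-! ### Auxiliary development for the proof of Theorem 2 -/

section Aux

variable {P X V : Type} {G : SimpleGraph P}

lemma write_inj {f : ℕ → Option (AEvent P X V)} {t : ℕ} {q q' : P} {x x' : X} {v v' : V}
    (h : isWriteAt f t q x v) (h' : isWriteAt f t q' x' v') : q = q' ∧ x = x' ∧ v = v' := by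
  have := h.symm.trans h'; simp only [Option.some.injEq, AEvent.invWrite.injEq] at this; exact this

lemma read_inj {f : ℕ → Option (AEvent P X V)} {t : ℕ} {p p' : P} {x x' : X} {ov ov' : Option V}
    (h : isReadAt f t p x ov) (h' : isReadAt f t p' x' ov') : p = p' ∧ x = x' ∧ ov = ov' := by
  have := h.symm.trans h'; simp only [Option.some.injEq, AEvent.read.injEq] at this; exact this

lemma deliver_inj {f : ℕ → Option (AEvent P X V)} {t : ℕ} {p p' q q' : P} {x x' : X} {v v' : V}
    (h : dAt f p q x v t) (h' : dAt f p' q' x' v' t) : p = p' ∧ q = q' ∧ x = x' ∧ v = v' := by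
  have := h.symm.trans h'; simp only [dAt, Option.some.injEq, AEvent.deliver.injEq] at this
  exact this

lemma write_ne_read {f : ℕ → Option (AEvent P X V)} {t : ℕ} {q p : P} {x x' : X} {v : V}
    {ov : Option V} (h : isWriteAt f t q x v) (h' : isReadAt f t p x' ov) : False := by
  have := h.symm.trans h'; simp at this

lemma write_ne_deliver {f : ℕ → Option (AEvent P X V)} {t : ℕ} {q p r : P} {x x' : X} {v v' : V}
    (h : isWriteAt f t q x v) (h' : dAt f p r x' v' t) : False := by
  have := h.symm.trans h'; simp [dAt] at this

lemma read_ne_deliver {f : ℕ → Option (AEvent P X V)} {t : ℕ} {q p r : P} {x x' : X}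
    {ov : Option V} {v' : V} (h : isReadAt f t q x ov) (h' : dAt f p r x' v' t) : False := by
  have := h.symm.trans h'; simp [dAt] at this

lemma op_of_write {f : ℕ → Option (AEvent P X V)} {t : ℕ} {s q : P} {x : X} {v : V}
    (h : isOpOf f t s) (hw : isWriteAt f t q x v) : s = q := by
  rcases h with ⟨x', v', hr⟩ | ⟨x', v', hw'⟩
  · exact (write_ne_read hw hr).elim
  · exact (write_inj hw' hw).1

lemma op_of_read {f : ℕ → Option (AEvent P X V)} {t : ℕ} {s p : P} {x : X} {ov : Option V}
    (h : isOpOf f t s) (hr : isReadAt f t p x ov) : s = p := by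
  rcases h with ⟨x', v', hr'⟩ | ⟨x', v', hw'⟩
  · exact (read_inj hr' hr).1
  · exact (write_ne_read hw' hr).elim

variable (E : Exec P X V G)

lemma bcast_val_unique {q q' : P} {x x' : X} {v : V} {t t' : ℕ}
    (h : bAt E.ev q x v t) (h' : bAt E.ev q' x' v t') : t = t' ∧ q = q' ∧ x = x' := by
  have ht := E.distinctValues t t' q q' x x' v h h'
  subst ht
  have := write_inj (f := E.ev) h h'
  exact ⟨rfl, this.1, this.2.1⟩

lemma dom_cases {p : P} {t : ℕ} (h : Dom E.ev p t) :
    (∃ x ov, isReadAt E.ev t p x ov) ∨ (∃ q x v, isWriteAt E.ev t q x v) := by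
  rcases h with (⟨x, ov, hr⟩ | ⟨x, v, hw⟩) | ⟨q, x, v, hw⟩
  · exact Or.inl ⟨x, ov, hr⟩
  · exact Or.inr ⟨p, x, v, hw⟩
  · exact Or.inr ⟨q, x, v, hw⟩

lemma dom_read {p pb : P} {t : ℕ} {x : X} {ov : Option V} (h : Dom E.ev p t)
    (hr : isReadAt E.ev t pb x ov) : pb = p := by
  rcases h with hop | ⟨q, x', v, hw⟩
  · exact (op_of_read hop hr).symm
  · exact (write_ne_read hw hr).elim

/-- The latest delivery before `t` at `p` concerning register `x` carries the current value. -/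
lemma val_some {t : ℕ} {p : P} {x : X} {v : V} (h : E.val t p x = some v) :
    ∃ q s, s < t ∧ dAt E.ev p q x v s ∧
      ∀ s' q' v', s < s' → s' < t → ¬ dAt E.ev p q' x v' s' := by
  induction t with
  | zero => rw [E.val0] at h; cases h
  | succ t ih =>
    by_cases hd : ∃ q w, E.ev t = some (.deliver p q x w)
    · obtain ⟨q, w, hw⟩ := hd
      have hv := E.valDeliv t p q x w hw
      rw [hv] at h
      obtain rfl : w = v := Option.some.inj h
      exact ⟨q, t, Nat.lt_succ_self t, hw, fun s' q' v' h1 h2 => absurd h1 (by omega)⟩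
    · have hv := E.valFrame t p x hd
      rw [hv] at h
      obtain ⟨q, s, hs, hdel, hmax⟩ := ih h
      refine ⟨q, s, by omega, hdel, ?_⟩
      intro s' q' v' h1 h2 hdel'
      rcases Nat.lt_succ_iff_lt_or_eq.mp h2 with h2 | rfl
      · exact hmax s' q' v' h1 h2 hdel'
      · exact hd ⟨q', v', hdel'⟩

lemma val_none {t : ℕ} {p : P} {x : X} (h : E.val t p x = none) :
    ∀ s, s < t → ∀ q v, ¬ dAt E.ev p q x v s := by
  induction t with
  | zero => omega
  | succ t ih =>
    by_cases hd : ∃ q w, E.ev t = some (.deliver p q x w)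
    · obtain ⟨q, w, hw⟩ := hd
      have hv := E.valDeliv t p q x w hw
      rw [hv] at h; cases h
    · have hv := E.valFrame t p x hd
      rw [hv] at h
      intro s hs q v hdel
      rcases Nat.lt_succ_iff_lt_or_eq.mp hs with hs | rfl
      · exact ih h s hs q v hdel
      · exact hd ⟨q, v, hdel⟩

/-- After a write by `q`, the next operation of `q` comes after the local delivery. -/
lemma after_write {q : P} {x : X} {v : V} {t td b : ℕ} (hw : bAt E.ev q x v t)
    (htd : dAt E.ev q q x v td) (hb : t < b) (hop : isOpOf E.ev b q) : td < b := by
  obtain ⟨td', h1, h2, h3⟩ := E.blockingWrite t q x v hw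
  obtain rfl : td = td' := E.integrity q q x v td td' htd h2
  rcases Nat.lt_trichotomy b td with h | rfl | h
  · exfalso
    obtain ⟨hnw, hnr⟩ := h3 b hb h
    rcases hop with ⟨x', v', hr⟩ | ⟨x', v', hw'⟩
    · exact hnr x' v' hr
    · exact hnw x' v' hw'
  · exfalso
    rcases hop with ⟨x', v', hr⟩ | ⟨x', v', hw'⟩
    · exact read_ne_deliver hr h2
    · exact write_ne_deliver hw' h2
  · exact h

end Aux

section Aux2

variable {P X V : Type} {G : SimpleGraph P} (E : Exec P X V G)

/-- Delivery-order property for a message-level relation. -/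
def DOrd (m1 m2 : P × X × V) : Prop :=
  (∃ t, bAt E.ev m1.1 m1.2.1 m1.2.2 t) ∧ (∃ t, bAt E.ev m2.1 m2.2.1 m2.2.2 t) ∧
  ∀ ρ s1 s2, dAt E.ev ρ m1.1 m1.2.1 m1.2.2 s1 → dAt E.ev ρ m2.1 m2.2.1 m2.2.2 s2 → s1 < s2

lemma dord_trans {m1 m2 m3 : P × X × V} (h1 : DOrd E m1 m2) (h2 : DOrd E m2 m3) :
    DOrd E m1 m3 := by
  refine ⟨h1.1, h2.2.1, ?_⟩
  intro ρ s1 s2 hd1 hd2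
  obtain ⟨tb, hb⟩ := h1.2.1
  obtain ⟨sb, hdb⟩ := E.termination tb _ _ _ hb ρ
  exact lt_trans (h1.2.2 ρ s1 sb hd1 hdb) (h2.2.2 ρ sb s2 hdb hd2)

lemma mcausal_dord {m1 m2 : P × X × V} (h : MCausal E.ev m1 m2) : DOrd E m1 m2 := by
  induction h with
  | @sameProc q x1 x2 v1 v2 t1 t2 hlt hb1 hb2 =>
    refine ⟨⟨t1, hb1⟩, ⟨t2, hb2⟩, ?_⟩
    intro ρ s1 s2 hd1 hd2
    rcases Nat.lt_trichotomy s1 s2 with h | rfl | h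
    · exact h
    · exfalso
      obtain ⟨-, -, hx, hv⟩ := deliver_inj (f := E.ev) hd1 hd2
      subst hx; subst hv
      exact absurd (E.distinctValues t1 t2 q q x1 x1 v1 hb1 hb2) (by omega)
    · exact absurd ⟨ρ, s2, s1, h, hd2, hd1⟩
        (E.causalOrder (q, x1, v1) (q, x2, v2) (MCausal.sameProc hlt hb1 hb2))
  | @delivered p q x1 x2 v1 v2 t1 t2 hlt hd hb =>
    refine ⟨E.validity t1 p q x1 v1 hd, ⟨t2, hb⟩, ?_⟩
    intro ρ s1 s2 hd1 hd2
    rcases Nat.lt_trichotomy s1 s2 with h | rfl | h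
    · exact h
    · exfalso
      obtain ⟨-, hq, hx, hv⟩ := deliver_inj (f := E.ev) hd1 hd2
      subst hq; subst hx; subst hv
      obtain ⟨td, h1, h2, -⟩ := E.blockingWrite t2 q x1 v1 hb
      have := E.integrity q q x1 v1 t1 td hd h2
      omega
    · exact absurd ⟨ρ, s2, s1, h, hd2, hd1⟩
        (E.causalOrder (q, x1, v1) (p, x2, v2) (MCausal.delivered hlt hd hb))
  | trans h1 h2 ih1 ih2 => exact dord_trans E ih1 ih2

/-- Pairs of writes by `G`-neighbours, ordered by delivery at the first sender. -/
def gpair (m1 m2 : P × X × V) : Prop :=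
  G.Adj m1.1 m2.1 ∧ (∃ t, bAt E.ev m1.1 m1.2.1 m1.2.2 t) ∧ (∃ t, bAt E.ev m2.1 m2.2.1 m2.2.2 t) ∧
  ∃ s s', s < s' ∧ dAt E.ev m1.1 m1.1 m1.2.1 m1.2.2 s ∧ dAt E.ev m1.1 m2.1 m2.2.1 m2.2.2 s'

lemma gpair_dord {m1 m2 : P × X × V} (h : gpair E m1 m2) : DOrd E m1 m2 := by
  obtain ⟨hadj, hb1, hb2, s, s', hss, hd1, hd2⟩ := h
  refine ⟨hb1, hb2, ?_⟩
  intro ρ s1 s2 hd1' hd2'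
  obtain ⟨t1, hbb1⟩ := hb1
  obtain ⟨t2, hbb2⟩ := hb2
  have hno := E.gOrder m1.1 m2.1 hadj m1.2.1 m2.2.1 m1.2.2 m2.2.2 t1 t2 hbb1 hbb2
    ⟨m1.1, s, s', hss, hd1, hd2⟩
  rcases Nat.lt_trichotomy s1 s2 with h | rfl | h
  · exact h
  · exfalso
    obtain ⟨-, hq, -, -⟩ := deliver_inj (f := E.ev) hd1' hd2'
    rw [hq] at hadj
    exact G.irrefl hadj
  · exact absurd ⟨ρ, s2, s1, h, hd2', hd1'⟩ hno

/-- The subsuming order at message level. -/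
def MStar : P × X × V → P × X × V → Prop :=
  Relation.TransGen (fun a b => MCausal E.ev a b ∨ gpair E a b)

lemma mstar_dord {m1 m2 : P × X × V} (h : MStar E m1 m2) : DOrd E m1 m2 := by
  induction h with
  | single h => rcases h with h | h; exacts [mcausal_dord E h, gpair_dord E h]
  | tail _ h ih =>
    rcases h with h | h
    exacts [dord_trans E ih (mcausal_dord E h), dord_trans E ih (gpair_dord E h)]

end Aux2

section Aux3

variable {P X V : Type} {G : SimpleGraph P} (E : Exec P X V G)

/-- Write operations by `G`-neighbours, `gpair`-ordered. -/
def gwrite (a b : ℕ) : Prop :=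
  ∃ p x v q x' v', isWriteAt E.ev a p x v ∧ isWriteAt E.ev b q x' v' ∧
    gpair E (p, x, v) (q, x', v')

/-- One step of the subsuming order `⇝*`. -/
def stepR (a b : ℕ) : Prop :=
  (procOrder E.ev a b ∨ readFrom E.ev a b) ∨ gwrite E a b

/-- The subsuming order `⇝*_{H,G}`. -/
def RStar : ℕ → ℕ → Prop := Relation.TransGen (stepR E)

/-- The key invariant propagated along `⇝*`-chains. -/
def Phi (a b : ℕ) : Prop :=
  (∀ qa xa va, isWriteAt E.ev a qa xa va →
    (∀ qb xb vb, isWriteAt E.ev b qb xb vb → MStar E (qa, xa, va) (qb, xb, vb)) ∧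
    (∀ pb xb ovb, isReadAt E.ev b pb xb ovb → ∀ s, dAt E.ev pb qa xa va s → s < b)) ∧
  (∀ pa xa ova, isReadAt E.ev a pa xa ova →
    (∀ qb xb vb, isWriteAt E.ev b qb xb vb →
      ∃ w xw vw, isWriteAt E.ev w pa xw vw ∧ a < w ∧
        ((qb = pa ∧ xb = xw ∧ vb = vw) ∨ MStar E (pa, xw, vw) (qb, xb, vb))) ∧
    (∀ pb xb ovb, isReadAt E.ev b pb xb ovb →
      (pa = pb ∧ a < b) ∨ ∃ w xw vw, isWriteAt E.ev w pa xw vw ∧ a < w ∧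
        ∀ s, dAt E.ev pb pa xw vw s → s < b))

lemma phi_step {a b : ℕ} (h : stepR E a b) : Phi E a b := by
  rcases h with (hpo | hrf) | hgw
  · obtain ⟨hab, s, hopa, hopb⟩ := hpo
    constructor
    · intro qa xa va hwa
      obtain rfl : qa = s := (op_of_write hopa hwa).symm
      constructor
      · intro qb xb vb hwb
        obtain rfl : qb = qa := (op_of_write hopb hwb).symm
        exact Relation.TransGen.single (Or.inl (MCausal.sameProc hab hwa hwb))
      · intro pb xb ovb hrb s' hd
        obtain rfl : pb = qa := (op_of_read hopb hrb).symm
        exact after_write E hwa hd hab hopb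
    · intro pa xa ova hra
      obtain rfl : pa = s := (op_of_read hopa hra).symm
      constructor
      · intro qb xb vb hwb
        obtain rfl : qb = pa := (op_of_write hopb hwb).symm
        exact ⟨b, xb, vb, hwb, hab, Or.inl ⟨rfl, rfl, rfl⟩⟩
      · intro pb xb ovb hrb
        obtain rfl : pb = pa := (op_of_read hopb hrb).symm
        exact Or.inl ⟨rfl, hab⟩
  · obtain ⟨q', p', x', v', hw, hr⟩ := hrf
    constructor
    · intro qa xa va hwa
      obtain ⟨rfl, rfl, rfl⟩ := write_inj hw hwa
      constructor
      · intro qb xb vb hwb; exact (write_ne_read hwb hr).elim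
      · intro pb xb ovb hrb s hd
        obtain ⟨rfl, -, -⟩ := read_inj hr hrb
        have hv := E.readsLocal b p' x' (some v') hr
        obtain ⟨q2, s2, hs2, hd2, -⟩ := val_some E hv.symm
        obtain ⟨t2, hb2⟩ := E.validity s2 p' q2 x' v' hd2
        obtain ⟨-, rfl, -⟩ := bcast_val_unique E hb2 hw
        have := E.integrity p' q2 x' v' s s2 hd hd2
        omega
    · intro pa xa ova hra; exact (write_ne_read hw hra).elim
  · obtain ⟨p0, x0, v0, q0, x0', v0', hwa, hwb, hgp⟩ := hgw
    constructor
    · intro qa xa va hwa'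
      obtain ⟨rfl, rfl, rfl⟩ := write_inj hwa hwa'
      constructor
      · intro qb xb vb hwb'
        obtain ⟨rfl, rfl, rfl⟩ := write_inj hwb hwb'
        exact Relation.TransGen.single (Or.inr hgp)
      · intro pb xb ovb hrb; exact (write_ne_read hwb hrb).elim
    · intro pa xa ova hra; exact (write_ne_read hwa hra).elim

lemma phi_tail {a b' b : ℕ} (ih : Phi E a b') (h : stepR E b' b) : Phi E a b := by
  rcases h with (hpo | hrf) | hgw
  · -- procOrder step
    obtain ⟨hbb, s, hop', hopb⟩ := hpo
    constructor
    · intro qa xa va hwa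
      constructor
      · intro qb xb vb hwb
        obtain rfl : qb = s := (op_of_write hopb hwb).symm
        rcases hop' with ⟨x1, ov1, hr1⟩ | ⟨x1, v1, hw1⟩
        · have hA2 := (ih.1 qa xa va hwa).2 qb x1 ov1 hr1
          obtain ⟨t1, hd1⟩ := E.termination a qa xa va hwa qb
          exact Relation.TransGen.single
            (Or.inl (MCausal.delivered (lt_trans (hA2 t1 hd1) hbb) hd1 hwb))
        · have hM := (ih.1 qa xa va hwa).1 qb x1 v1 hw1
          exact hM.trans (Relation.TransGen.single (Or.inl (MCausal.sameProc hbb hw1 hwb)))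
      · intro pb xb ovb hrb s' hd
        obtain rfl : pb = s := (op_of_read hopb hrb).symm
        rcases hop' with ⟨x1, ov1, hr1⟩ | ⟨x1, v1, hw1⟩
        · exact lt_trans ((ih.1 qa xa va hwa).2 pb x1 ov1 hr1 s' hd) hbb
        · have hM := (ih.1 qa xa va hwa).1 pb x1 v1 hw1
          obtain ⟨td, h1, h2, -⟩ := E.blockingWrite b' pb x1 v1 hw1
          have htd : td < b := after_write E hw1 h2 hbb hopb
          have := (mstar_dord E hM).2.2 pb s' td hd h2
          omega
    · intro pa xa ova hra
      constructor
      · intro qb xb vb hwb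
        obtain rfl : qb = s := (op_of_write hopb hwb).symm
        rcases hop' with ⟨x1, ov1, hr1⟩ | ⟨x1, v1, hw1⟩
        · rcases (ih.2 pa xa ova hra).2 qb x1 ov1 hr1 with ⟨rfl, hab'⟩ |
            ⟨w, xw, vw, hww, haw, hlast⟩
          · exact ⟨b, xb, vb, hwb, lt_trans hab' hbb, Or.inl ⟨rfl, rfl, rfl⟩⟩
          · obtain ⟨t1, hd1⟩ := E.termination w pa xw vw hww qb
            exact ⟨w, xw, vw, hww, haw, Or.inr (Relation.TransGen.single
              (Or.inl (MCausal.delivered (lt_trans (hlast t1 hd1) hbb) hd1 hwb)))⟩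
        · rcases (ih.2 pa xa ova hra).1 qb x1 v1 hw1 with ⟨w, xw, vw, hww, haw, hcase⟩
          refine ⟨w, xw, vw, hww, haw, Or.inr ?_⟩
          have hM1 : MCausal E.ev (qb, x1, v1) (qb, xb, vb) := MCausal.sameProc hbb hw1 hwb
          rcases hcase with ⟨rfl, rfl, rfl⟩ | hM
          · exact Relation.TransGen.single (Or.inl hM1)
          · exact hM.trans (Relation.TransGen.single (Or.inl hM1))
      · intro pb xb ovb hrb
        obtain rfl : pb = s := (op_of_read hopb hrb).symm
        rcases hop' with ⟨x1, ov1, hr1⟩ | ⟨x1, v1, hw1⟩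
        · rcases (ih.2 pa xa ova hra).2 pb x1 ov1 hr1 with ⟨rfl, hab'⟩ |
            ⟨w, xw, vw, hww, haw, hlast⟩
          · exact Or.inl ⟨rfl, lt_trans hab' hbb⟩
          · exact Or.inr ⟨w, xw, vw, hww, haw, fun s' hd => lt_trans (hlast s' hd) hbb⟩
        · rcases (ih.2 pa xa ova hra).1 pb x1 v1 hw1 with ⟨w, xw, vw, hww, haw, hcase⟩
          refine Or.inr ⟨w, xw, vw, hww, haw, ?_⟩
          obtain ⟨td, h1, h2, -⟩ := E.blockingWrite b' pb x1 v1 hw1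
          have htd : td < b := after_write E hw1 h2 hbb hopb
          intro s' hd
          rcases hcase with ⟨rfl, rfl, rfl⟩ | hM
          · have := E.integrity pb pb x1 v1 s' td hd h2
            omega
          · have := (mstar_dord E hM).2.2 pb s' td hd h2
            omega
  · -- readFrom step
    obtain ⟨q', p', x', v', hw, hr⟩ := hrf
    have hv := E.readsLocal b p' x' (some v') hr
    obtain ⟨q2, s2, hs2, hd2, -⟩ := val_some E hv.symm
    obtain ⟨t2, hb2⟩ := E.validity s2 p' q2 x' v' hd2
    obtain ⟨-, rfl, -⟩ := bcast_val_unique E hb2 hw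
    constructor
    · intro qa xa va hwa
      have IH := (ih.1 qa xa va hwa).1 q2 x' v' hw
      constructor
      · intro qb xb vb hwb; exact (write_ne_read hwb hr).elim
      · intro pb xb ovb hrb s hd
        obtain ⟨rfl, -, -⟩ := read_inj hr hrb
        have := (mstar_dord E IH).2.2 p' s s2 hd hd2
        omega
    · intro pa xa ova hra
      rcases (ih.2 pa xa ova hra).1 q2 x' v' hw with ⟨w, xw, vw, hww, haw, hcase⟩
      constructor
      · intro qb xb vb hwb; exact (write_ne_read hwb hr).elim
      · intro pb xb ovb hrb
        obtain ⟨rfl, -, -⟩ := read_inj hr hrb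
        refine Or.inr ⟨w, xw, vw, hww, haw, ?_⟩
        intro s hd
        rcases hcase with ⟨rfl, rfl, rfl⟩ | hM
        · have := E.integrity p' q2 x' v' s s2 hd hd2
          omega
        · have := (mstar_dord E hM).2.2 p' s s2 hd hd2
          omega
  · -- gwrite step
    obtain ⟨p0, x0, v0, q0, x0', v0', hw1, hw2, hgp⟩ := hgw
    constructor
    · intro qa xa va hwa
      have IH := (ih.1 qa xa va hwa).1 p0 x0 v0 hw1
      constructor
      · intro qb xb vb hwb
        obtain ⟨rfl, rfl, rfl⟩ := write_inj hw2 hwb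
        exact IH.trans (Relation.TransGen.single (Or.inr hgp))
      · intro pb xb ovb hrb; exact (write_ne_read hw2 hrb).elim
    · intro pa xa ova hra
      rcases (ih.2 pa xa ova hra).1 p0 x0 v0 hw1 with ⟨w, xw, vw, hww, haw, hcase⟩
      constructor
      · intro qb xb vb hwb
        obtain ⟨rfl, rfl, rfl⟩ := write_inj hw2 hwb
        refine ⟨w, xw, vw, hww, haw, Or.inr ?_⟩
        rcases hcase with ⟨rfl, rfl, rfl⟩ | hM
        · exact Relation.TransGen.single (Or.inr hgp)
        · exact hM.trans (Relation.TransGen.single (Or.inr hgp))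
      · intro pb xb ovb hrb; exact (write_ne_read hw2 hrb).elim

lemma phi {a b : ℕ} (h : RStar E a b) : Phi E a b := by
  induction h with
  | single h => exact phi_step E h
  | tail _ h ih => exact phi_tail E ih h

end Aux3

section Aux4

variable {P X V : Type} {G : SimpleGraph P} (E : Exec P X V G)

open Classical in
/-- Position of operation `t` in the linearization of process `p`: a write is
placed at its local delivery time at `p`, a read at its own time. -/
noncomputable def pos (p : P) (t : ℕ) : ℕ :=
  if h : ∃ s q x v, isWriteAt E.ev t q x v ∧ dAt E.ev p q x v s then h.choose else t

lemma pos_write {p q : P} {x : X} {v : V} {t : ℕ} (hw : isWriteAt E.ev t q x v) :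
    dAt E.ev p q x v (pos E p t) := by
  have hex : ∃ s q' x' v', isWriteAt E.ev t q' x' v' ∧ dAt E.ev p q' x' v' s := by
    obtain ⟨s, hs⟩ := E.termination t q x v hw p
    exact ⟨s, q, x, v, hw, hs⟩
  rw [pos, dif_pos hex]
  obtain ⟨q', x', v', hw', hd'⟩ := hex.choose_spec
  obtain ⟨rfl, rfl, rfl⟩ := write_inj hw hw'
  exact hd'

lemma pos_read {p pb : P} {t : ℕ} {x : X} {ov : Option V} (hr : isReadAt E.ev t pb x ov) :
    pos E p t = t := by
  rw [pos, dif_neg]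
  rintro ⟨s, q, x', v', hw, -⟩
  exact write_ne_read hw hr

/-- The linearization `Ŝ_p`. -/
def Sp (p : P) (a b : ℕ) : Prop := Dom E.ev p a ∧ Dom E.ev p b ∧ pos E p a < pos E p b

lemma pos_inj {p : P} {a b : ℕ} (ha : Dom E.ev p a) (hb : Dom E.ev p b)
    (h : pos E p a = pos E p b) : a = b := by
  rcases dom_cases E ha with ⟨x, ov, hra⟩ | ⟨q, x, v, hwa⟩ <;>
    rcases dom_cases E hb with ⟨x2, ov2, hrb⟩ | ⟨q2, x2, v2, hwb⟩
  · rw [pos_read E hra, pos_read E hrb] at h; exact h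
  · exfalso
    rw [pos_read E hra] at h
    have := pos_write (p := p) E hwb
    rw [← h] at this
    exact read_ne_deliver hra this
  · exfalso
    rw [pos_read E hrb] at h
    have := pos_write (p := p) E hwa
    rw [h] at this
    exact read_ne_deliver hrb this
  · have d1 := pos_write (p := p) E hwa
    have d2 := pos_write (p := p) E hwb
    rw [h] at d1
    obtain ⟨-, rfl, rfl, rfl⟩ := deliver_inj d1 d2
    exact E.distinctValues a b q q x x v hwa hwb

lemma proc_pos {p : P} {a b : ℕ} (ha : Dom E.ev p a) (hb : Dom E.ev p b)
    (hpo : procOrder E.ev a b) : pos E p a < pos E p b := by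
  obtain ⟨hab, s, hopa, hopb⟩ := hpo
  rcases hopa with ⟨x1, ov1, hr1⟩ | ⟨x1, v1, hw1⟩
  · obtain rfl : p = s := (dom_read E ha hr1).symm
    rcases hopb with ⟨x2, ov2, hr2⟩ | ⟨x2, v2, hw2⟩
    · rw [pos_read E hr1, pos_read E hr2]; exact hab
    · rw [pos_read E hr1]
      obtain ⟨td, h1, h2, -⟩ := E.blockingWrite b p x2 v2 hw2
      have := E.integrity p p x2 v2 (pos E p b) td (pos_write E hw2) h2
      omega
  · rcases hopb with ⟨x2, ov2, hr2⟩ | ⟨x2, v2, hw2⟩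
    · obtain rfl : p = s := (dom_read E hb hr2).symm
      rw [pos_read E hr2]
      exact after_write E hw1 (pos_write E hw1) hab (Or.inl ⟨x2, ov2, hr2⟩)
    · exact (mcausal_dord E (MCausal.sameProc hab hw1 hw2)).2.2 p _ _
        (pos_write E hw1) (pos_write E hw2)

lemma rstar_pos {p : P} {a b : ℕ} (ha : Dom E.ev p a) (hb : Dom E.ev p b)
    (h : RStar E a b) : pos E p a < pos E p b := by
  have hphi := phi E h
  rcases dom_cases E ha with ⟨x1, ov1, hr1⟩ | ⟨q1, x1, v1, hw1⟩
  · rw [pos_read E hr1]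
    rcases dom_cases E hb with ⟨x2, ov2, hr2⟩ | ⟨q2, x2, v2, hw2⟩
    · rw [pos_read E hr2]
      rcases (hphi.2 p x1 ov1 hr1).2 p x2 ov2 hr2 with ⟨-, hab⟩ |
        ⟨w, xw, vw, hww, haw, hlast⟩
      · exact hab
      · obtain ⟨td, hwtd, htd, -⟩ := E.blockingWrite w p xw vw hww
        have := hlast td htd
        omega
    · rcases (hphi.2 p x1 ov1 hr1).1 q2 x2 v2 hw2 with ⟨w, xw, vw, hww, haw, hcase⟩
      obtain ⟨td, hwtd, htd, -⟩ := E.blockingWrite w p xw vw hww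
      have hd2 := pos_write (p := p) E hw2
      rcases hcase with ⟨hq, hx, hv⟩ | hM
      · rw [hq, hx, hv] at hd2
        have := E.integrity p p xw vw (pos E p b) td hd2 htd
        omega
      · have := (mstar_dord E hM).2.2 p td (pos E p b) htd hd2
        omega
  · have hd1 := pos_write (p := p) E hw1
    rcases dom_cases E hb with ⟨x2, ov2, hr2⟩ | ⟨q2, x2, v2, hw2⟩
    · rw [pos_read E hr2]
      exact (hphi.1 q1 x1 v1 hw1).2 p x2 ov2 hr2 (pos E p a) hd1
    · exact (mstar_dord E ((hphi.1 q1 x1 v1 hw1).1 q2 x2 v2 hw2)).2.2 p _ _ hd1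
        (pos_write E hw2)

lemma rstar_irrefl : ∀ a, ¬ RStar E a a := by
  intro a h
  have hphi := phi E h
  have htype : ∃ c, stepR E c a := by
    cases h with
    | single hs => exact ⟨_, hs⟩
    | tail _ hs => exact ⟨_, hs⟩
  obtain ⟨c, htype⟩ := htype
  have hty : (∃ p x ov, isReadAt E.ev a p x ov) ∨ (∃ q x v, isWriteAt E.ev a q x v) := by
    rcases htype with (⟨-, s, -, hopb⟩ | ⟨q', p', x', v', -, hr⟩) |
      ⟨p0, x0, v0, q0, x0', v0', -, hw, -⟩
    · rcases hopb with ⟨x, ov, hr⟩ | ⟨x, v, hw⟩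
      exacts [Or.inl ⟨s, x, ov, hr⟩, Or.inr ⟨s, x, v, hw⟩]
    · exact Or.inl ⟨p', x', v', hr⟩
    · exact Or.inr ⟨q0, x0', v0', hw⟩
  rcases hty with ⟨pa, x, ov, hr⟩ | ⟨q, x, v, hw⟩
  · rcases (hphi.2 pa x ov hr).2 pa x ov hr with ⟨-, hlt⟩ | ⟨w, xw, vw, hww, haw, hlast⟩
    · omega
    · obtain ⟨td, h1, h2, -⟩ := E.blockingWrite w pa xw vw hww
      have := hlast td h2
      omega
  · have hM := (hphi.1 q x v hw).1 q x v hw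
    obtain ⟨td, h1, h2, -⟩ := E.blockingWrite a q x v hw
    exact absurd ((mstar_dord E hM).2.2 q td td h2 h2) (lt_irrefl td)

end Aux4

section Aux5

variable {P X V : Type} {G : SimpleGraph P} (E : Exec P X V G)

lemma causalH_sub {a b : ℕ} (h : causalH E.ev a b) : RStar E a b :=
  Relation.TransGen.mono (fun _ _ h => Or.inl h) a b h

lemma linear_Sp (p : P) : LinearOnTrace E.ev (Dom E.ev p) (Sp E p) := by
  refine ⟨fun a b h => ⟨h.1, h.2.1⟩, fun a h => lt_irrefl _ h.2.2,
    fun a b c h1 h2 => ⟨h1.1, h2.2.1, lt_trans h1.2.2 h2.2.2⟩, ?_⟩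
  intro a b ha hb hne
  rcases Nat.lt_trichotomy (pos E p a) (pos E p b) with h | h | h
  · exact Or.inl ⟨ha, hb, h⟩
  · exact absurd (pos_inj E ha hb h) hne
  · exact Or.inr ⟨hb, ha, h⟩

lemma legal_Sp (p : P) : LegalOnTrace E.ev (Dom E.ev p) (Sp E p) := by
  constructor
  · intro t pb x v hD hr
    obtain rfl : p = pb := (dom_read E hD hr).symm
    have hv := E.readsLocal t p x (some v) hr
    obtain ⟨q, s0, hs0, hd0, hmax⟩ := val_some E hv.symm
    obtain ⟨w, hbw⟩ := E.validity s0 p q x v hd0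
    have hDw : Dom E.ev p w := Or.inr ⟨q, x, v, hbw⟩
    have hposw : pos E p w = s0 := E.integrity p q x v _ s0 (pos_write E hbw) hd0
    have hpost : pos E p t = t := pos_read E hr
    refine ⟨w, q, hDw, hbw, ⟨hDw, hD, by omega⟩, ?_⟩
    rintro ⟨w', q', v', hDw', hww', ⟨-, -, h1⟩, ⟨-, -, h2⟩⟩
    have hd' := pos_write (p := p) E hww'
    rw [hposw] at h1
    rw [hpost] at h2
    exact hmax (pos E p w') q' v' h1 h2 hd'
  · intro t pb x hD hr
    obtain rfl : p = pb := (dom_read E hD hr).symm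
    rintro ⟨w, q, v, hDw, hww, ⟨-, -, h1⟩⟩
    rw [pos_read E hr] at h1
    exact val_none E (E.readsLocal t p x none hr).symm (pos E p w) h1 q v (pos_write E hww)

lemma g_total : ∀ p q : P, G.Adj p q → ∀ a b : ℕ, a ≠ b →
    (∃ x v, isWriteAt E.ev a p x v ∨ isWriteAt E.ev a q x v) →
    (∃ x v, isWriteAt E.ev b p x v ∨ isWriteAt E.ev b q x v) →
    RStar E a b ∨ RStar E b a := by
  intro p q hadj a b hne h1 h2
  obtain ⟨x1, v1, hw1⟩ := h1
  obtain ⟨x2, v2, hw2⟩ := h2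
  obtain ⟨qa, hwa, hqa⟩ : ∃ qa, isWriteAt E.ev a qa x1 v1 ∧ (qa = p ∨ qa = q) := by
    rcases hw1 with h | h
    exacts [⟨p, h, Or.inl rfl⟩, ⟨q, h, Or.inr rfl⟩]
  obtain ⟨qb, hwb, hqb⟩ : ∃ qb, isWriteAt E.ev b qb x2 v2 ∧ (qb = p ∨ qb = q) := by
    rcases hw2 with h | h
    exacts [⟨p, h, Or.inl rfl⟩, ⟨q, h, Or.inr rfl⟩]
  by_cases hqq : qa = qb
  · subst hqq
    rcases hne.lt_or_gt with h | h
    · exact Or.inl (Relation.TransGen.single (Or.inl (Or.inl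
        ⟨h, qa, Or.inr ⟨x1, v1, hwa⟩, Or.inr ⟨x2, v2, hwb⟩⟩)))
    · exact Or.inr (Relation.TransGen.single (Or.inl (Or.inl
        ⟨h, qa, Or.inr ⟨x2, v2, hwb⟩, Or.inr ⟨x1, v1, hwa⟩⟩)))
  · have hadj' : G.Adj qa qb := by
      rcases hqa with rfl | rfl <;> rcases hqb with rfl | rfl <;>
        first | exact hadj | exact hadj.symm | exact absurd rfl hqq
    obtain ⟨d1, hd1t, hd1, -⟩ := E.blockingWrite a qa x1 v1 hwa
    obtain ⟨d2, hd2⟩ := E.termination b qb x2 v2 hwb qa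
    have hdne : d1 ≠ d2 := fun h => hqq ((deliver_inj (h ▸ hd1) hd2).2.1)
    rcases lt_or_gt_of_ne hdne with h | h
    · exact Or.inl (Relation.TransGen.single (Or.inr ⟨qa, x1, v1, qb, x2, v2, hwa, hwb,
        hadj', ⟨a, hwa⟩, ⟨b, hwb⟩, d1, d2, h, hd1, hd2⟩))
    · obtain ⟨d2', hd2t', hd2', -⟩ := E.blockingWrite b qb x2 v2 hwb
      obtain ⟨d1', hd1'⟩ := E.termination a qa x1 v1 hwa qb
      have hno := E.gOrder qb qa hadj'.symm x2 x1 v2 v1 b a hwb hwa ⟨qa, d2, d1, h, hd2, hd1⟩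
      have hdne' : d1' ≠ d2' := fun h => hqq ((deliver_inj (h ▸ hd1') hd2').2.1)
      rcases lt_or_gt_of_ne hdne' with h' | h'
      · exact absurd ⟨qb, d1', d2', h', hd1', hd2'⟩ hno
      · exact Or.inr (Relation.TransGen.single (Or.inr ⟨qb, x2, v2, qa, x1, v1, hwb, hwa,
          hadj'.symm, ⟨b, hwb⟩, ⟨a, hwa⟩, d2', d1', h', hd2', hd1'⟩))

end Aux5

/-- **Theorem 2.**  Algorithm 2 (the fast-read register algorithm built on top
of the `G`-fisheye (SC,CC)-broadcast of Algorithm 1) implements `G`-fisheye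
(SC,CC)-consistency: for every history produced by an execution of Algorithm 2
there are a causal order `⇝_H` and a subsuming (strict partial) order
`⇝*_{H,G} ⊇ ⇝_H` totally ordering the writes of every pair of `G`-neighboring
processes such that for each process `p` there is a sequential legal history
`Ŝ_p`, equivalent to `Ĥ|(p+W)` (it preserves the process orders on its
domain), that respects `⇝*_{H,G}`. -/
theorem algorithm2_implements_fisheye_consistency {P X V : Type}
    {G : SimpleGraph P} (E : Exec P X V G) :
    ∃ r rstar : ℕ → ℕ → Prop,
      IsCausalOrderTrace E.ev r ∧
      (∀ a b, r a b → rstar a b) ∧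
      (∀ a, ¬ rstar a a) ∧
      (∀ a b c, rstar a b → rstar b c → rstar a c) ∧
      (∀ p q : P, G.Adj p q → ∀ a b : ℕ, a ≠ b →
        (∃ (x : X) (v : V), isWriteAt E.ev a p x v ∨ isWriteAt E.ev a q x v) →
        (∃ (x : X) (v : V), isWriteAt E.ev b p x v ∨ isWriteAt E.ev b q x v) →
        rstar a b ∨ rstar b a) ∧
      (∀ p : P, ∃ S : ℕ → ℕ → Prop,
        LinearOnTrace E.ev (Dom E.ev p) S ∧
        LegalOnTrace E.ev (Dom E.ev p) S ∧
        (∀ a b, Dom E.ev p a → Dom E.ev p b → procOrder E.ev a b → S a b) ∧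
        (∀ a b, Dom E.ev p a → Dom E.ev p b → rstar a b → S a b)) := by
  refine ⟨causalH E.ev, RStar E,
    ⟨fun a h => rstar_irrefl E a (causalH_sub E h), fun a b c h1 h2 => h1.trans h2,
      fun a b h => Relation.TransGen.single (Or.inl h), ?_, ?_⟩,
    fun a b h => causalH_sub E h, rstar_irrefl E, fun a b c h1 h2 => h1.trans h2,
    g_total E, ?_⟩
  · intro t p x v hr
    have hv := E.readsLocal t p x (some v) hr
    obtain ⟨q, s0, hs0, hd0, hmax⟩ := val_some E hv.symm
    obtain ⟨w, hbw⟩ := E.validity s0 p q x v hd0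
    refine ⟨w, q, hbw, Relation.TransGen.single (Or.inr ⟨q, p, x, v, hbw, hr⟩), ?_⟩
    rintro ⟨w', q', v', hw', hrww', hrw't⟩
    have hM := ((phi E (causalH_sub E hrww')).1 q x v hbw).1 q' x v' hw'
    have hA2 := ((phi E (causalH_sub E hrw't)).1 q' x v' hw').2 p x (some v) hr
    obtain ⟨s', hd'⟩ := E.termination w' q' x v' hw' p
    exact hmax s' q' v' ((mstar_dord E hM).2.2 p s0 s' hd0 hd') (hA2 s' hd') hd'
  · intro t p x hr
    rintro ⟨w, q, v, hw, hrw⟩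
    have hA2 := ((phi E (causalH_sub E hrw)).1 q x v hw).2 p x none hr
    obtain ⟨s, hd⟩ := E.termination w q x v hw p
    exact val_none E (E.readsLocal t p x none hr).symm s (hA2 s hd) q v hd
  · intro p
    exact ⟨Sp E p, linear_Sp E p, legal_Sp E p,
      fun a b ha hb hpo => ⟨ha, hb, proc_pos E ha hb hpo⟩,
      fun a b ha hb h => ⟨ha, hb, rstar_pos E ha hb h⟩⟩

end FisheyeReg
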